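/- If 1/2 < p ≤ t ≤ 2/3, then bold play is not optimal: there exists an odd integer n = 2k+1 such that with c_1 = ... = c_n = 1/n, P(Σ c_i β_i ≥ t) = P(Bin(n,p) ≥ (n+1)/2) > p. -/

import Mathlib

open MeasureTheory ProbabilityTheory

/-- **Bold play is not optimal for `1/2 < p ≤ t ≤ 2/3`.** There is an odd integer
`n = 2k+1` such that placing equal stakes `1/n` on `n` iid Bernoulli(p) bets reaches
the threshold `t` with probability `P(Bin(n,p) ≥ (n+1)/2)`, which is strictly larger
than the bold play value `p`. -/
theorem boldPlay_not_optimal {Ω : Type*} [MeasurableSpace Ω]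
    (μ : Measure Ω) [IsProbabilityMeasure μ] (p t : ℝ)
    (β : ℕ → Ω → ℝ) (hmeas : ∀ i, Measurable (β i))
    (hval : ∀ i ω, β i ω = 0 ∨ β i ω = 1)
    (hβp : ∀ i, μ {ω | β i ω = 1} = ENNReal.ofReal p)
    (hindep : iIndepFun β μ)
    (hp : 1 / 2 < p) (hpt : p ≤ t) (ht : t ≤ 2 / 3) :
    ∃ k : ℕ, 0 < k ∧
      (μ {ω | t ≤ ∑ i ∈ Finset.range (2 * k + 1),
          (1 / (2 * k + 1 : ℝ)) * β i ω}).toReal =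
        (∑ j ∈ Finset.Icc (k + 1) (2 * k + 1),
          (Nat.choose (2 * k + 1) j : ℝ) * p ^ j * (1 - p) ^ (2 * k + 1 - j)) ∧
      p < (μ {ω | t ≤ ∑ i ∈ Finset.range (2 * k + 1),
          (1 / (2 * k + 1 : ℝ)) * β i ω}).toReal := by
  have hp0 : (0:ℝ) ≤ p := by linarith
  have hp1 : p ≤ 1 := by linarith
  have hq0 : (0:ℝ) ≤ 1 - p := by linarith
  have ht2 : 1/2 < t := lt_of_lt_of_le hp hpt
  set A : ℕ → Set Ω := fun i => β i ⁻¹' {1} with hAdef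
  set B : ℕ → Set Ω := fun i => β i ⁻¹' {0} with hBdef
  have hAmeas : ∀ i, MeasurableSet (A i) := fun i => (hmeas i) (measurableSet_singleton 1)
  have hAμ : ∀ i, μ (A i) = ENNReal.ofReal p := by
    intro i; rw [← hβp i]; rfl
  have hBcompl : ∀ i, B i = (A i)ᶜ := by
    intro i; ext ω
    simp only [hAdef, hBdef, Set.mem_preimage, Set.mem_singleton_iff, Set.mem_compl_iff]
    rcases hval i ω with h | h <;> simp [h]
  have hBμ : ∀ i, μ (B i) = ENNReal.ofReal (1 - p) := by
    intro i
    rw [hBcompl i, measure_compl (hAmeas i) (measure_ne_top μ _), hAμ, measure_univ,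
      ENNReal.ofReal_sub 1 hp0, ENNReal.ofReal_one]
  -- product formula
  have hmul : ∀ (f : ℕ → Set ℝ), (∀ i, MeasurableSet (f i)) →
      μ (β 0 ⁻¹' f 0 ∩ (β 1 ⁻¹' f 1 ∩ β 2 ⁻¹' f 2)) =
        μ (β 0 ⁻¹' f 0) * (μ (β 1 ⁻¹' f 1) * μ (β 2 ⁻¹' f 2)) := by
    intro f hf
    have h := hindep.measure_inter_preimage_eq_mul ({0,1,2} : Finset ℕ)
      (sets := f) (fun i _ => hf i)
    simpa using h
  have m1 : MeasurableSet ({1} : Set ℝ) := measurableSet_singleton 1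
  have m0 : MeasurableSet ({0} : Set ℝ) := measurableSet_singleton 0
  have hAAA : μ (A 0 ∩ (A 1 ∩ A 2)) = ENNReal.ofReal (p * (p * p)) := by
    have := hmul (fun _ => {1}) (fun _ => m1)
    rw [hAdef]
    rw [this, hAμ 0, hAμ 1, hAμ 2, ← ENNReal.ofReal_mul hp0, ← ENNReal.ofReal_mul hp0]
  have hAAB : μ (A 0 ∩ (A 1 ∩ B 2)) = ENNReal.ofReal (p * (p * (1 - p))) := by
    have := hmul (fun i => if i = 2 then {0} else {1})
      (fun i => by by_cases h : i = 2 <;> simp [h, m0, m1])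
    norm_num at this
    rw [hAdef, hBdef]
    simp only
    rw [this, hAμ 0, hAμ 1, hBμ 2, ← ENNReal.ofReal_mul hp0, ← ENNReal.ofReal_mul hp0]
  have hABA : μ (A 0 ∩ (B 1 ∩ A 2)) = ENNReal.ofReal (p * ((1 - p) * p)) := by
    have := hmul (fun i => if i = 1 then {0} else {1})
      (fun i => by by_cases h : i = 1 <;> simp [h, m0, m1])
    norm_num at this
    rw [hAdef, hBdef]
    simp only
    rw [this, hAμ 0, hBμ 1, hAμ 2, ← ENNReal.ofReal_mul hq0, ← ENNReal.ofReal_mul hp0]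
  have hBAA : μ (B 0 ∩ (A 1 ∩ A 2)) = ENNReal.ofReal ((1 - p) * (p * p)) := by
    have := hmul (fun i => if i = 0 then {0} else {1})
      (fun i => by by_cases h : i = 0 <;> simp [h, m0, m1])
    norm_num at this
    rw [hAdef, hBdef]
    simp only
    rw [this, hBμ 0, hAμ 1, hAμ 2, ← ENNReal.ofReal_mul hp0, ← ENNReal.ofReal_mul hq0]
  -- event decomposition
  have hset : {ω | t ≤ ∑ i ∈ Finset.range 3, (1 / (3:ℝ)) * β i ω} =
      (A 0 ∩ (A 1 ∩ A 2)) ∪ ((A 0 ∩ (A 1 ∩ B 2)) ∪ ((A 0 ∩ (B 1 ∩ A 2)) ∪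
        (B 0 ∩ (A 1 ∩ A 2)))) := by
    ext ω
    simp only [Set.mem_setOf_eq, Finset.sum_range_succ, Finset.sum_range_zero, zero_add,
      Set.mem_union, Set.mem_inter_iff, hAdef, hBdef, Set.mem_preimage, Set.mem_singleton_iff]
    rcases hval 0 ω with h0 | h0 <;> rcases hval 1 ω with h1 | h1 <;>
      rcases hval 2 ω with h2 | h2 <;>
      simp only [h0, h1, h2] <;> norm_num <;>
      first
      | linarith
      | (intro h; linarith)
      | (constructor <;> intro h <;> linarith)
  -- disjointness
  have hdisj : ∀ (i : ℕ) (X Y : Set Ω), X ⊆ A i → Y ⊆ B i → Disjoint X Y := by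
    intro i X Y hX hY
    rw [Set.disjoint_left]
    intro ω hω hω'
    have h1 : β i ω = 1 := hX hω
    have h0 : β i ω = 0 := hY hω'
    rw [h1] at h0; norm_num at h0
  have key : μ {ω | t ≤ ∑ i ∈ Finset.range 3, (1 / (3:ℝ)) * β i ω} =
      ENNReal.ofReal (p * (p * p) + (p * (p * (1 - p)) + (p * ((1 - p) * p) +
        (1 - p) * (p * p)))) := by
    rw [hset]
    have mA : ∀ i, MeasurableSet (A i) := hAmeas
    have mB : ∀ i, MeasurableSet (B i) := fun i => (hmeas i) m0
    rw [measure_union ?d1 ?m1', measure_union ?d2 ?m2', measure_union ?d3 ?m3']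
    case d3 =>
      exact hdisj 0 _ _ (fun ω h => h.1) (fun ω h => h.1)
    case d2 =>
      apply Set.disjoint_union_right.mpr
      constructor
      · exact hdisj 1 _ _ (fun ω h => h.2.1) (fun ω h => h.2.1)
      · exact hdisj 0 _ _ (fun ω h => h.1) (fun ω h => h.1)
    case d1 =>
      apply Set.disjoint_union_right.mpr
      refine ⟨hdisj 2 _ _ (fun ω h => h.2.2) (fun ω h => h.2.2), ?_⟩
      apply Set.disjoint_union_right.mpr
      constructor
      · exact hdisj 1 _ _ (fun ω h => h.2.1) (fun ω h => h.2.1)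
      · exact hdisj 0 _ _ (fun ω h => h.1) (fun ω h => h.1)
    case m1' =>
      exact (((mA 0).inter ((mA 1).inter (mB 2))).union
        (((mA 0).inter ((mB 1).inter (mA 2))).union ((mB 0).inter ((mA 1).inter (mA 2)))))
    case m2' =>
      exact (((mA 0).inter ((mB 1).inter (mA 2))).union ((mB 0).inter ((mA 1).inter (mA 2))))
    case m3' =>
      exact ((mB 0).inter ((mA 1).inter (mA 2)))
    rw [hAAA, hAAB, hABA, hBAA]
    have n1 : (0:ℝ) ≤ p * (p * p) := mul_nonneg hp0 (mul_nonneg hp0 hp0)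
    have n2 : (0:ℝ) ≤ p * (p * (1 - p)) := mul_nonneg hp0 (mul_nonneg hp0 hq0)
    have n3 : (0:ℝ) ≤ p * ((1 - p) * p) := mul_nonneg hp0 (mul_nonneg hq0 hp0)
    have n4 : (0:ℝ) ≤ (1 - p) * (p * p) := mul_nonneg hq0 (mul_nonneg hp0 hp0)
    rw [← ENNReal.ofReal_add n3 n4, ← ENNReal.ofReal_add n2 (add_nonneg n3 n4),
      ← ENNReal.ofReal_add n1 (add_nonneg n2 (add_nonneg n3 n4))]
  refine ⟨1, one_pos, ?_, ?_⟩ <;>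
  · have h3 : (2 * 1 + 1 : ℕ) = 3 := by norm_num
    have hc : (1 / (2 * (1:ℕ) + 1 : ℝ)) = 1 / 3 := by norm_num
    rw [h3]
    simp only [Nat.cast_one, hc] at *
    rw [show {ω | t ≤ ∑ i ∈ Finset.range 3, (1 / (2 * (1:ℝ) + 1)) * β i ω} =
      {ω | t ≤ ∑ i ∈ Finset.range 3, (1 / (3:ℝ)) * β i ω} by norm_num]
    rw [key, ENNReal.toReal_ofReal (by nlinarith)]
    · first
      | (rw [show Finset.Icc 2 3 = {2, 3} from rfl]
         simp [Finset.sum_insert, Finset.sum_singleton]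
         norm_num
         ring)
      | nlinarith [mul_pos (mul_pos (by linarith : (0:ℝ) < p) (by nlinarith : (0:ℝ) < 1 - p)) (by linarith : (0:ℝ) < 2*p - 1)]
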